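/- Let f : 𝕊 → ℝ be continuous and nonnegative (1-periodic), let Λ⁻²f(x) = ∫₀¹ g(x-y) f(y) dy with g the strictly positive periodic Green's function, and let F(x) = (Λ⁻²f)'(x). If f ≡ 0 on [x₀, x₁] and F(x₀) = F(x₁), then f ≡ 0 on all of 𝕊. -/

import Mathlib

open MeasureTheory intervalIntegral Set

/-- A continuous nonnegative function with zero integral vanishes on `Ioc a b`. -/
lemma aux_eq_zero_of_integral_eq_zero {h : ℝ → ℝ} (hc : Continuous h)
    (hnn : ∀ x, 0 ≤ h x) {a b : ℝ} (hab : a < b)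
    (hint : (∫ x in a..b, h x) = 0) : ∀ x ∈ Set.Ioc a b, h x = 0 := by
  rw [intervalIntegral.integral_of_le hab.le] at hint
  have hi : IntegrableOn h (Set.Ioc a b) := hc.integrableOn_Ioc
  have h0 : h =ᵐ[volume.restrict (Set.Ioc a b)] 0 :=
    (MeasureTheory.integral_eq_zero_iff_of_nonneg hnn hi).mp hint
  have hsub : Set.Ioc a b ⊆ closure (interior (Set.Ioc a b)) := by
    rw [interior_Ioc, closure_Ioo hab.ne]
    exact Set.Ioc_subset_Icc_self
  exact MeasureTheory.Measure.eqOn_of_ae_eq h0 hc.continuousOn continuousOn_const hsub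

/-- If `f` is continuous, 1-periodic, nonnegative, `Λ⁻²f(x) = ∫₀¹ g(x-y) f(y) dy`,
`F = (Λ⁻²f)'`, and `f ≡ 0` on `[x₀, x₁]` with `F(x₀) = F(x₁)`, then `f ≡ 0`. -/
theorem unique_continuation_from_interval
    (g f : ℝ → ℝ)
    (hg : ∀ x : ℝ, g x = Real.cosh (x - ⌊x⌋ - 1/2) / (2 * Real.sinh (1/2)))
    (hf_cont : Continuous f)
    (hf_per : Function.Periodic f 1)
    (hf_nonneg : ∀ x : ℝ, 0 ≤ f x)
    (Λf F : ℝ → ℝ)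
    (hΛf : ∀ x : ℝ, Λf x = ∫ y in (0:ℝ)..1, g (x - y) * f y)
    (hF : ∀ x : ℝ, F x = deriv Λf x)
    (x₀ x₁ : ℝ) (hx : x₀ < x₁)
    (hvanish : ∀ x ∈ Set.Icc x₀ x₁, f x = 0)
    (hFeq : F x₀ = F x₁) :
    ∀ x : ℝ, f x = 0 := by
  set c : ℝ := 2 * Real.sinh (1/2) with hc_def
  have hc0 : 0 < c := by
    have := Real.sinh_pos_iff.mpr (by norm_num : (0:ℝ) < 1/2)
    positivity
  -- g is 1-periodic
  have hgper : ∀ t : ℝ, g (t - 1) = g t := by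
    intro t
    rw [hg, hg]
    have : ⌊t - 1⌋ = ⌊t⌋ - 1 := by
      rw [show t - 1 = t + (-1 : ℤ) by push_cast; ring, Int.floor_add_intCast]; omega
    rw [this]
    push_cast
    ring_nf
  -- key formula for Λf
  have key : ∀ x : ℝ, Λf x = (1/c) * ∫ y in (x-1)..x, Real.cosh (x - y - 1/2) * f y := by
    intro x
    have hper : Function.Periodic (fun y => g (x - y) * f y) 1 := by
      intro y
      simp only
      rw [show x - (y + 1) = (x - y) - 1 by ring, hgper, hf_per y]
    have h1 : (∫ y in (0:ℝ)..1, g (x - y) * f y) = ∫ y in (x-1)..x, g (x - y) * f y := by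
      have := hper.intervalIntegral_add_eq 0 (x - 1)
      simpa using this
    have h2 : (∫ y in (x-1)..x, g (x - y) * f y)
        = ∫ y in (x-1)..x, (1/c) * (Real.cosh (x - y - 1/2) * f y) := by
      apply intervalIntegral.integral_congr
      intro y hy
      rw [Set.uIcc_of_le (by linarith : x - 1 ≤ x)] at hy
      have hy1 : 0 ≤ x - y := by have := hy.2; linarith
      have hy2 : x - y ≤ 1 := by have := hy.1; linarith
      simp only
      rcases lt_or_eq_of_le hy2 with h | h
      · have hfl : ⌊x - y⌋ = 0 := Int.floor_eq_zero_iff.mpr ⟨hy1, h⟩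
        rw [hg, hfl]
        push_cast
        ring
      · rw [h, hg]
        norm_num
        ring
    rw [hΛf, h1, h2, intervalIntegral.integral_const_mul]
  -- auxiliary integrands
  set ca : ℝ → ℝ := fun y => Real.cosh (y + 1/2) * f y with hca_def
  set sb : ℝ → ℝ := fun y => Real.sinh (y + 1/2) * f y with hsb_def
  have hca_cont : Continuous ca := (Real.continuous_cosh.comp (by continuity)).mul hf_cont
  have hsb_cont : Continuous sb := (Real.continuous_sinh.comp (by continuity)).mul hf_cont
  set A : ℝ → ℝ := fun x => (∫ y in (0:ℝ)..x, ca y) - ∫ y in (0:ℝ)..(x-1), ca y with hA_def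
  set B : ℝ → ℝ := fun x => (∫ y in (0:ℝ)..x, sb y) - ∫ y in (0:ℝ)..(x-1), sb y with hB_def
  -- A x = ∫_{x-1}^x ca
  have hAint : ∀ x : ℝ, A x = ∫ y in (x-1)..x, ca y := fun x =>
    intervalIntegral.integral_interval_sub_left
      (hca_cont.intervalIntegrable 0 x) (hca_cont.intervalIntegrable 0 (x-1))
  have hBint : ∀ x : ℝ, B x = ∫ y in (x-1)..x, sb y := fun x =>
    intervalIntegral.integral_interval_sub_left
      (hsb_cont.intervalIntegrable 0 x) (hsb_cont.intervalIntegrable 0 (x-1))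
  -- derivatives of A and B
  have hGderiv : ∀ (h : ℝ → ℝ), Continuous h → ∀ x : ℝ,
      HasDerivAt (fun u => (∫ y in (0:ℝ)..u, h y) - ∫ y in (0:ℝ)..(u-1), h y)
        (h x - h (x-1)) x := by
    intro h hcont x
    have h1 : HasDerivAt (fun u => ∫ y in (0:ℝ)..u, h y) (h x) x :=
      intervalIntegral.integral_hasDerivAt_right (hcont.intervalIntegrable 0 x)
        hcont.stronglyMeasurable.stronglyMeasurableAtFilter hcont.continuousAt
    have h2 : HasDerivAt (fun u => ∫ y in (0:ℝ)..u, h y) (h (x-1)) (x-1) :=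
      intervalIntegral.integral_hasDerivAt_right (hcont.intervalIntegrable 0 (x-1))
        hcont.stronglyMeasurable.stronglyMeasurableAtFilter hcont.continuousAt
    have h3 : HasDerivAt (fun u : ℝ => u - 1) 1 x := (hasDerivAt_id x).sub_const 1
    have h4 := HasDerivAt.comp x h2 h3
    exact (h1.sub h4).congr_deriv (by ring)
  have hfx1 : ∀ x : ℝ, f (x - 1) = f x := by
    intro x
    have := hf_per (x - 1)
    rw [show x - 1 + 1 = x by ring] at this
    exact this.symm
  have hA' : ∀ x : ℝ, HasDerivAt A ((Real.cosh (x + 1/2) - Real.cosh (x - 1/2)) * f x) x := by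
    intro x
    have h0 := hGderiv ca hca_cont x
    convert h0 using 1
    simp only [hca_def]
    rw [show x - 1 + 1/2 = x - 1/2 by ring, hfx1 x]
    ring
  have hB' : ∀ x : ℝ, HasDerivAt B ((Real.sinh (x + 1/2) - Real.sinh (x - 1/2)) * f x) x := by
    intro x
    have h0 := hGderiv sb hsb_cont x
    convert h0 using 1
    simp only [hsb_def]
    rw [show x - 1 + 1/2 = x - 1/2 by ring, hfx1 x]
    ring
  -- Λf in terms of A and B
  have hΛAB : ∀ x : ℝ, Λf x = (1/c) * (Real.cosh x * A x - Real.sinh x * B x) := by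
    intro x
    have e : Real.cosh x * A x - Real.sinh x * B x
        = ∫ y in (x-1)..x, (Real.cosh x * ca y - Real.sinh x * sb y) := by
      rw [intervalIntegral.integral_sub (f := fun y => Real.cosh x * ca y) (g := fun y => Real.sinh x * sb y)
          ((continuous_const.mul hca_cont).intervalIntegrable _ _)
          ((continuous_const.mul hsb_cont).intervalIntegrable _ _),
        intervalIntegral.integral_const_mul, intervalIntegral.integral_const_mul,
        hAint, hBint]
    rw [key x, e]
    congr 1
    apply intervalIntegral.integral_congr
    intro y _
    simp only [hca_def, hsb_def]
    rw [show x - y - 1/2 = x - (y + 1/2) by ring, Real.cosh_sub]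
    ring
  have hΛfun : Λf = fun x => (1/c) * (Real.cosh x * A x - Real.sinh x * B x) := funext hΛAB
  have hcne : c ≠ 0 := ne_of_gt hc0
  -- derivative of Λf
  have hΛderiv : ∀ x : ℝ, HasDerivAt Λf
      ((1/c) * (Real.sinh x * A x - Real.cosh x * B x)) x := by
    intro x
    rw [hΛfun]
    have h1 := (Real.hasDerivAt_cosh x).mul (hA' x)
    have h2 := (Real.hasDerivAt_sinh x).mul (hB' x)
    have h3 := (h1.sub h2).const_mul (1/c)
    have id1 : Real.cosh x * Real.cosh (x+1/2) - Real.sinh x * Real.sinh (x+1/2)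
        = Real.cosh (1/2) := by
      rw [← Real.cosh_sub, show x - (x + 1/2) = -(1/2) by ring, Real.cosh_neg]
    have id2 : Real.cosh x * Real.cosh (x-1/2) - Real.sinh x * Real.sinh (x-1/2)
        = Real.cosh (1/2) := by
      rw [← Real.cosh_sub, show x - (x - 1/2) = (1/2:ℝ) by ring]
    convert h3 using 1
    · rfl
    · rfl
    · rfl
    show 1 / c * (Real.sinh x * A x - Real.cosh x * B x) =
      1 / c * (Real.sinh x * A x + Real.cosh x * ((Real.cosh (x + 1 / 2) - Real.cosh (x - 1 / 2)) * f x) -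
        (Real.cosh x * B x + Real.sinh x * ((Real.sinh (x + 1 / 2) - Real.sinh (x - 1 / 2)) * f x)))
    linear_combination (-(f x)/c) * id1 + ((f x)/c) * id2
  have hFval : ∀ x : ℝ, F x = (1/c) * (Real.sinh x * A x - Real.cosh x * B x) := by
    intro x
    rw [hF x, (hΛderiv x).deriv]
  have hFfun : F = fun x => (1/c) * (Real.sinh x * A x - Real.cosh x * B x) := funext hFval
  -- derivative of F
  have hFderiv : ∀ x : ℝ, HasDerivAt F (Λf x - f x) x := by
    intro x
    rw [hFfun]
    have h1 := (Real.hasDerivAt_sinh x).mul (hA' x)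
    have h2 := (Real.hasDerivAt_cosh x).mul (hB' x)
    have h3 := (h1.sub h2).const_mul (1/c)
    convert h3 using 1
    · rfl
    · rfl
    · rfl
    show Λf x - f x = 1 / c * (Real.cosh x * A x + Real.sinh x * ((Real.cosh (x + 1 / 2) - Real.cosh (x - 1 / 2)) * f x) -
        (Real.sinh x * B x + Real.cosh x * ((Real.sinh (x + 1 / 2) - Real.sinh (x - 1 / 2)) * f x)))
    rw [hΛAB x]
    have id1 : Real.sinh x * Real.cosh (x+1/2) - Real.cosh x * Real.sinh (x+1/2)
        = -Real.sinh (1/2) := by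
      rw [← Real.sinh_sub, show x - (x + 1/2) = -(1/2) by ring, Real.sinh_neg]
    have id2 : Real.sinh x * Real.cosh (x-1/2) - Real.cosh x * Real.sinh (x-1/2)
        = Real.sinh (1/2) := by
      rw [← Real.sinh_sub, show x - (x - 1/2) = (1/2:ℝ) by ring]
    have hcc : c⁻¹ * c = 1 := inv_mul_cancel₀ hcne
    linear_combination (-(f x)/c) * id1 + ((f x)/c) * id2 + (f x) * hcc - ((f x)/c) * hc_def
  -- continuity of Λf
  have hAcont : Continuous A := continuous_iff_continuousAt.mpr fun x => (hA' x).continuousAt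
  have hBcont : Continuous B := continuous_iff_continuousAt.mpr fun x => (hB' x).continuousAt
  have hΛcont : Continuous Λf := by
    rw [hΛfun]
    exact continuous_const.mul
      ((Real.continuous_cosh.mul hAcont).sub (Real.continuous_sinh.mul hBcont))
  -- FTC
  have hFTC : (∫ y in x₀..x₁, (Λf y - f y)) = F x₁ - F x₀ :=
    intervalIntegral.integral_eq_sub_of_hasDerivAt (fun y _ => hFderiv y)
      ((hΛcont.sub hf_cont).intervalIntegrable x₀ x₁)
  have hfint0 : (∫ y in x₀..x₁, f y) = 0 := by
    have : (∫ y in x₀..x₁, f y) = ∫ y in x₀..x₁, (0:ℝ) := by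
      apply intervalIntegral.integral_congr
      intro y hy
      rw [Set.uIcc_of_le hx.le] at hy
      exact hvanish y hy
    simpa using this
  have hint0 : (∫ y in x₀..x₁, Λf y) = 0 := by
    rw [intervalIntegral.integral_sub (hΛcont.intervalIntegrable _ _)
      (hf_cont.intervalIntegrable _ _), hfint0, hFeq] at hFTC
    linarith
  -- Λf nonneg
  have hΛnonneg : ∀ x : ℝ, 0 ≤ Λf x := by
    intro x
    rw [hΛf x]
    apply intervalIntegral.integral_nonneg (by norm_num)
    intro y _
    have hgy : 0 ≤ g (x - y) := by
      rw [hg]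
      exact div_nonneg (Real.cosh_pos _).le hc0.le
    exact mul_nonneg hgy (hf_nonneg y)
  have hΛx₁ : Λf x₁ = 0 :=
    aux_eq_zero_of_integral_eq_zero hΛcont hΛnonneg hx hint0 x₁ ⟨hx, le_refl x₁⟩
  -- the convolution integral at x₁ vanishes
  have hI0 : (∫ y in (x₁-1)..x₁, Real.cosh (x₁ - y - 1/2) * f y) = 0 := by
    have h := (key x₁).symm.trans hΛx₁
    exact (mul_eq_zero.mp h).resolve_left (one_div_ne_zero hcne)
  have hzero1 : ∀ y ∈ Set.Ioc (x₁-1) x₁, f y = 0 := by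
    have hcont2 : Continuous (fun y => Real.cosh (x₁ - y - 1/2) * f y) :=
      (Real.continuous_cosh.comp
        ((continuous_const.sub continuous_id).sub continuous_const)).mul hf_cont
    intro y hy
    have h := aux_eq_zero_of_integral_eq_zero hcont2
      (fun y => mul_nonneg (Real.cosh_pos _).le (hf_nonneg y))
      (by linarith : x₁ - 1 < x₁) hI0 y hy
    rcases mul_eq_zero.mp h with h' | h'
    · exact absurd h' (Real.cosh_pos _).ne'
    · exact h'
  -- conclude by periodicity
  intro x
  have h1 : x - (⌈x - x₁⌉ : ℤ) ∈ Set.Ioc (x₁ - 1) x₁ := by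
    constructor
    · have := Int.ceil_lt_add_one (x - x₁)
      linarith
    · have := Int.le_ceil (x - x₁)
      linarith
  have h2 := hzero1 _ h1
  have h3 : f (x - (⌈x - x₁⌉ : ℤ) * (1:ℝ)) = f x := hf_per.sub_int_mul_eq ⌈x - x₁⌉
  rw [mul_one] at h3
  rw [← h3]
  exact h2
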